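/- For ω(y) = y^ν e^{−y} (ν ≥ 0 integer), n ≥ 2, σ, δ > 0, the ZF density formula ρ(γ) = (n−1)(σ/δ) ∫_0^1 K(0, σγx/δ)(1−x)^{n−2} x dx with K(0,y) = (1/((n−1)! ν!)) y^{−1} ∂_y^{n−1}[y^n ω(y)] simplifies to ρ(γ) = (σ/(ν! δ)) (σγ/δ)^ν e^{−σγ/δ}, i.e., the n-dependence cancels completely. -/

import Mathlib

open MeasureTheory

lemma aux_hasDerivAt (m : ℕ) (p : Polynomial ℝ) (u : ℝ) :
    HasDerivAt (fun v : ℝ => v ^ m * p.eval v * Real.exp (-v))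
      (((m : ℝ) * u ^ (m - 1) * p.eval u + u ^ m * p.derivative.eval u
        - u ^ m * p.eval u) * Real.exp (-u)) u := by
  have h1 : HasDerivAt (fun v : ℝ => v ^ m * p.eval v)
      ((m : ℝ) * u ^ (m - 1) * p.eval u + u ^ m * p.derivative.eval u) u := by
    simpa [mul_comm] using (hasDerivAt_pow m u).fun_mul (p.hasDerivAt u)
  have h2 : HasDerivAt (fun v : ℝ => Real.exp (-v)) (-Real.exp (-u)) u := by
    simpa [Function.comp_def] using (Real.hasDerivAt_exp (-u)).comp u (hasDerivAt_neg u)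
  have := h1.fun_mul h2
  exact this.congr_deriv (by ring)

lemma aux_iteratedDeriv (m k : ℕ) (hk : k ≤ m) :
    ∃ p : Polynomial ℝ, iteratedDeriv k (fun u : ℝ => u ^ m * Real.exp (-u))
      = fun u => u ^ (m - k) * p.eval u * Real.exp (-u) := by
  induction k with
  | zero => exact ⟨1, by simp⟩
  | succ k ih =>
    obtain ⟨p, hp⟩ := ih (Nat.le_of_succ_le hk)
    refine ⟨Polynomial.C ((m - k : ℕ) : ℝ) * p
      + Polynomial.X * (Polynomial.derivative p - p), ?_⟩
    rw [iteratedDeriv_succ, hp]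
    funext u
    rw [(aux_hasDerivAt (m - k) p u).deriv]
    have hmk : m - k = (m - (k + 1)) + 1 := by omega
    rw [hmk]
    simp only [pow_succ, Nat.cast_add, Nat.cast_one, Polynomial.eval_add,
      Polynomial.eval_mul, Polynomial.eval_C, Polynomial.eval_X, Polynomial.eval_sub,
      Nat.add_sub_cancel]
    ring

lemma aux_iteratedDeriv_zero (m k : ℕ) (hk : k < m) :
    iteratedDeriv k (fun u : ℝ => u ^ m * Real.exp (-u)) 0 = 0 := by
  obtain ⟨p, hp⟩ := aux_iteratedDeriv m k hk.le
  rw [hp]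
  have : m - k ≠ 0 := by omega
  simp [zero_pow this]

lemma aux_nat_lt_top (k : ℕ) : ((k : WithTop ℕ∞)) < ((⊤:ℕ∞) : WithTop ℕ∞) := by
  exact_mod_cast lt_top_iff_ne_top.2 (by simp : (k:ℕ∞) ≠ ⊤)

lemma aux_integral (m n : ℕ) (hn : 2 ≤ n) (hnm : n ≤ m) (a : ℝ) (ha : 0 < a) :
    ∫ x in (0:ℝ)..1,
      a ^ (n-1) * iteratedDeriv (n-1) (fun u : ℝ => u ^ m * Real.exp (-u)) (a * x)
        * (((n:ℝ) - 1) * (1 - x) ^ (n-2)) / (n-1).factorial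
      = a ^ m * Real.exp (-a) := by
  set g : ℝ → ℝ := fun u => u ^ m * Real.exp (-u) with hgdef
  have hg : ContDiff ℝ (⊤:ℕ∞) g := by fun_prop
  have hder : ∀ (j : ℕ) (x : ℝ),
      HasDerivAt (fun y => iteratedDeriv j g (a * y)) (a * iteratedDeriv (j+1) g (a*x)) x := by
    intro j x
    have hd : DifferentiableAt ℝ (iteratedDeriv j g) (a*x) :=
      (hg.differentiable_iteratedDeriv j
        (aux_nat_lt_top j)) (a*x)
    have h1 : HasDerivAt (iteratedDeriv j g) (iteratedDeriv (j+1) g (a*x)) (a*x) := by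
      rw [iteratedDeriv_succ]; exact hd.hasDerivAt
    have h2 : HasDerivAt (fun y : ℝ => a * y) a x := by
      simpa using (hasDerivAt_id x).const_mul a
    simpa [mul_comm, Function.comp_def] using h1.comp x h2
  set G : ℕ → ℝ → ℝ := fun j x =>
    a ^ j * iteratedDeriv j g (a*x) * ((j:ℝ) * (1-x)^(j-1)) / j.factorial with hGdef
  set U : ℝ → ℝ := fun x =>
    ∑ j ∈ Finset.range (n-1), a ^ j * iteratedDeriv j g (a*x) * (1-x)^j / j.factorial
    with hUdef
  have hU : ∀ x : ℝ, HasDerivAt U (G (n-1) x) x := by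
    intro x
    have hsum : HasDerivAt U (∑ j ∈ Finset.range (n-1), (G (j+1) x - G j x)) x := by
      apply HasDerivAt.fun_sum
      intro j hj
      have h1 := hder j x
      have h2 : HasDerivAt (fun y : ℝ => (1-y)^j) (-((j:ℝ) * (1-x)^(j-1))) x := by
        have hin : HasDerivAt (fun y : ℝ => 1 - y) (-1) x := (hasDerivAt_id x).const_sub 1
        simpa [Function.comp_def] using (hasDerivAt_pow j (1-x)).comp x hin
      have h3 := ((h1.const_mul (a^j)).fun_mul h2).div_const (j.factorial : ℝ)
      refine h3.congr_deriv ?_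
      have hfac : ((j+1).factorial : ℝ) = ((j:ℝ)+1) * j.factorial := by
        push_cast [Nat.factorial_succ]; ring
      simp only [hGdef]
      have hf1 : (j.factorial : ℝ) ≠ 0 := Nat.cast_ne_zero.2 j.factorial_ne_zero
      have hf2 : ((j+1).factorial : ℝ) ≠ 0 := Nat.cast_ne_zero.2 (j+1).factorial_ne_zero
      field_simp [hfac]
      rw [show j + 1 - 1 = j by omega, hfac]
      push_cast
      ring
    have := Finset.sum_range_sub (f := fun j => G j x) (n-1)
    rw [this] at hsum
    simpa [hGdef] using hsum
  have hc : Continuous (G (n-1)) := by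
    have h0 : Continuous (iteratedDeriv (n-1) g) :=
      hg.continuous_iteratedDeriv (n-1) (le_of_lt (aux_nat_lt_top (n-1)))
    apply Continuous.div_const
    exact ((continuous_const.mul (h0.comp (continuous_const.mul continuous_id))).mul
      (continuous_const.mul ((continuous_const.sub continuous_id).pow _)))
  have key : ∫ x in (0:ℝ)..1, G (n-1) x = U 1 - U 0 :=
    intervalIntegral.integral_eq_sub_of_hasDerivAt (fun x _ => hU x)
      (hc.intervalIntegrable 0 1)
  have hU1 : U 1 = a ^ m * Real.exp (-a) := by
    simp only [hUdef]
    rw [Finset.sum_eq_single 0]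
    · simp [hgdef]
    · intro b hb hb0
      simp [zero_pow hb0]
    · intro h
      exact absurd (Finset.mem_range.2 (by omega)) h
  have hU0 : U 0 = 0 := by
    simp only [hUdef]
    apply Finset.sum_eq_zero
    intro j hj
    have hjm : j < m := by
      have := Finset.mem_range.1 hj; omega
    have h0 : iteratedDeriv j g 0 = 0 := aux_iteratedDeriv_zero m j hjm
    simp [h0]
  have hGeq : ∀ x : ℝ,
      a ^ (n-1) * iteratedDeriv (n-1) g (a * x)
        * (((n:ℝ) - 1) * (1 - x) ^ (n-2)) / (n-1).factorial = G (n-1) x := by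
    intro x
    simp only [hGdef]
    have h1 : ((n-1:ℕ):ℝ) = (n:ℝ) - 1 := by push_cast [Nat.cast_sub (by omega : 1 ≤ n)]; ring
    have h2 : n - 1 - 1 = n - 2 := by omega
    rw [h1, h2]
  calc ∫ x in (0:ℝ)..1,
      a ^ (n-1) * iteratedDeriv (n-1) g (a * x)
        * (((n:ℝ) - 1) * (1 - x) ^ (n-2)) / (n-1).factorial
      = ∫ x in (0:ℝ)..1, G (n-1) x := by
        apply intervalIntegral.integral_congr
        intro x _
        exact hGeq x
    _ = U 1 - U 0 := key
    _ = a ^ m * Real.exp (-a) := by rw [hU1, hU0, sub_zero]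

/-- For the Laguerre weight `ω(u) = u^ν e^{−u}`, `n ≥ 2`, `σ, δ > 0`, the ZF
density `ρ(γ) = (n−1)(σ/δ) ∫_0^1 K(0,σγx/δ)(1−x)^{n−2} x dx`, with
`K(0,y) = (1/((n−1)! ν!)) y⁻¹ ∂_y^{n−1}[y^n ω(y)]`, equals the Gamma density
`(σ/(ν! δ))(σγ/δ)^ν e^{−σγ/δ}`: all `n`-dependence cancels. -/
theorem zf_density_laguerre_simplifies (n ν : ℕ) (hn : 2 ≤ n)
    (σ δ : ℝ) (hσ : 0 < σ) (hδ : 0 < δ) (γ : ℝ) (hγ : 0 < γ) :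
    ((n : ℝ) - 1) * (σ / δ) *
        ∫ x in Set.Ioc (0 : ℝ) 1,
          ((1 / ((n - 1).factorial * ν.factorial : ℝ)) * (σ * γ * x / δ)⁻¹ *
              iteratedDeriv (n - 1) (fun u => u ^ n * (u ^ ν * Real.exp (-u)))
                (σ * γ * x / δ)) *
            (1 - x) ^ (n - 2) * x =
      σ / (ν.factorial * δ) * (σ * γ / δ) ^ ν * Real.exp (-(σ * γ / δ)) := by
  set a : ℝ := σ * γ / δ with ha
  set m : ℕ := n + ν with hm
  have ha0 : 0 < a := by positivity
  have hgfun : (fun u : ℝ => u ^ n * (u ^ ν * Real.exp (-u)))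
      = fun u : ℝ => u ^ m * Real.exp (-u) := by
    funext u; rw [hm, pow_add]; ring
  rw [hgfun]
  set C : ℝ := 1 / (ν.factorial * ((n:ℝ) - 1) * a ^ n) with hC
  have hn1 : ((n:ℝ) - 1) ≠ 0 := by
    have : (2:ℝ) ≤ (n:ℝ) := by exact_mod_cast hn
    linarith
  have hfν : (ν.factorial : ℝ) ≠ 0 := Nat.cast_ne_zero.2 ν.factorial_ne_zero
  have hfn : ((n-1).factorial : ℝ) ≠ 0 := Nat.cast_ne_zero.2 (n-1).factorial_ne_zero
  have hstep : ∫ x in Set.Ioc (0 : ℝ) 1,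
        ((1 / ((n - 1).factorial * ν.factorial : ℝ)) * (σ * γ * x / δ)⁻¹ *
            iteratedDeriv (n - 1) (fun u : ℝ => u ^ m * Real.exp (-u)) (σ * γ * x / δ)) *
          (1 - x) ^ (n - 2) * x
      = ∫ x in Set.Ioc (0 : ℝ) 1,
        C * (a ^ (n-1) * iteratedDeriv (n-1) (fun u : ℝ => u ^ m * Real.exp (-u)) (a * x)
          * (((n:ℝ) - 1) * (1 - x) ^ (n-2)) / (n-1).factorial) := by
    apply setIntegral_congr_fun measurableSet_Ioc
    intro x hx
    obtain ⟨hx0, hx1⟩ := hx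
    have harg : σ * γ * x / δ = a * x := by rw [ha]; ring
    dsimp only
    rw [harg, hC]
    have hxne : x ≠ 0 := ne_of_gt hx0
    have hane : a ≠ 0 := ne_of_gt ha0
    have hpow : a ^ n = a ^ (n-1) * a := by
      rw [← pow_succ]; congr 1; omega
    field_simp
    rw [hpow]
    ring
  rw [hstep, ← intervalIntegral.integral_of_le (zero_le_one),
    intervalIntegral.integral_const_mul,
    aux_integral m n hn (by omega) a ha0]
  rw [hC, hm, pow_add]
  have hane : a ≠ 0 := ne_of_gt ha0
  have hδne : δ ≠ 0 := ne_of_gt hδ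
  field_simp
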